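/- arXiv:1912.01090 — 2 statements merged into one kernel-verified Lean document; each statement's English description precedes it below -/
import Mathlib

section
/- If b is an odd integer greater than 1, then #([b] ∩ [b-3]) = σ(b) - 2; if b is an even integer greater than 2, then #([b] ∩ [b-3]) = σ(b) - 1. -/
/-- Stirling numbers of the second kind. -/
def stirling2 : ℕ → ℕ → ℕ
  | 0, 0 => 1
  | 0, _ + 1 => 0
  | _ + 1, 0 => 0
  | n + 1, k + 1 => (k + 1) * stirling2 n (k + 1) + stirling2 n k

/-- Sum of base-2 digits. -/
def sigma2 (n : ℕ) : ℕ := (Nat.digits 2 n).sum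

/-- The set of powers of 2 appearing in the binary expansion of `n`. -/
def twoPows (n : ℕ) : Finset ℕ := (Nat.bitIndices n).toFinset.image (2 ^ ·)

def T (n : ℕ) : Finset ℕ := (Nat.bitIndices n).toFinset

lemma sigma2_rec (n : ℕ) (hn : 0 < n) : sigma2 n = n % 2 + sigma2 (n / 2) := by
  unfold sigma2
  rw [Nat.digits_def' (by norm_num) hn]
  simp

lemma sigma2_two_mul (n : ℕ) (hn : 0 < n) : sigma2 (2 * n) = sigma2 n := by
  rw [sigma2_rec (2 * n) (by omega)]
  simp [Nat.mul_div_cancel_left, Nat.mul_mod_right]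

lemma sigma2_two_mul_add_one (n : ℕ) : sigma2 (2 * n + 1) = 1 + sigma2 n := by
  rw [sigma2_rec (2 * n + 1) (by omega)]
  simp [Nat.mul_add_mod, Nat.mul_add_div]

lemma T_two_mul (n : ℕ) : T (2 * n) = (T n).image (· + 1) := by
  ext x
  simp [T, Nat.bitIndices_two_mul]

lemma T_two_mul_add_one (n : ℕ) : T (2 * n + 1) = insert 0 ((T n).image (· + 1)) := by
  ext x
  simp [T, Nat.bitIndices_two_mul_add_one]

lemma T_card (n : ℕ) : (T n).card = sigma2 n := by
  induction n using Nat.strong_induction_on with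
  | _ n ih =>
    rcases Nat.eq_zero_or_pos n with h | h
    · subst h; simp [T, sigma2]
    rcases Nat.even_or_odd n with ⟨k, hk⟩ | ⟨k, hk⟩
    · have hk' : n = 2 * k := by omega
      subst hk'
      rw [T_two_mul, Finset.card_image_of_injective _ (add_left_injective 1),
        ih k (by omega), sigma2_two_mul k (by omega)]
    · subst hk
      rw [T_two_mul_add_one, Finset.card_insert_of_notMem (by simp),
        Finset.card_image_of_injective _ (add_left_injective 1),
        ih k (by omega), sigma2_two_mul_add_one]
      omega

lemma zero_not_mem_image (s : Finset ℕ) (c : ℕ) (hc : 0 < c) : 0 ∉ s.image (· + c) := by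
  simp; omega

lemma key (n : ℕ) (hn : 0 < n) : (T n ∩ T (n - 1)).card + 1 = sigma2 n := by
  induction n using Nat.strong_induction_on with
  | _ n ih =>
    rcases Nat.even_or_odd n with ⟨k, hk⟩ | ⟨k, hk⟩
    · have hk' : n = 2 * k := by omega
      have hkpos : 0 < k := by omega
      subst hk'
      have h1 : 2 * k - 1 = 2 * (k - 1) + 1 := by omega
      rw [h1, T_two_mul, T_two_mul_add_one,
        Finset.inter_insert_of_notMem (zero_not_mem_image _ 1 one_pos),
        ← Finset.image_inter _ _ (add_left_injective 1),
        Finset.card_image_of_injective _ (add_left_injective 1),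
        ih k (by omega) hkpos, sigma2_two_mul k hkpos]
    · subst hk
      have h1 : 2 * k + 1 - 1 = 2 * k := by omega
      rw [h1, T_two_mul, T_two_mul_add_one,
        Finset.insert_inter_of_notMem (zero_not_mem_image _ 1 one_pos),
        Finset.inter_self,
        Finset.card_image_of_injective _ (add_left_injective 1),
        T_card, sigma2_two_mul_add_one]
      omega

lemma T_four_mul (n : ℕ) : T (4 * n) = (T n).image (· + 2) := by
  have : 4 * n = 2 * (2 * n) := by ring
  rw [this, T_two_mul, T_two_mul, Finset.image_image]
  congr 1

lemma T_four_mul_add_one (n : ℕ) : T (4 * n + 1) = insert 0 ((T n).image (· + 2)) := by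
  have : 4 * n + 1 = 2 * (2 * n) + 1 := by ring
  rw [this, T_two_mul_add_one, T_two_mul, Finset.image_image]
  congr 1

lemma T_four_mul_add_two (n : ℕ) : T (4 * n + 2) = insert 1 ((T n).image (· + 2)) := by
  have : 4 * n + 2 = 2 * (2 * n + 1) := by ring
  rw [this, T_two_mul, T_two_mul_add_one, Finset.image_insert, Finset.image_image]
  congr 1

lemma T_four_mul_add_three (n : ℕ) :
    T (4 * n + 3) = insert 0 (insert 1 ((T n).image (· + 2))) := by
  have : 4 * n + 3 = 2 * (2 * n + 1) + 1 := by ring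
  rw [this, T_two_mul_add_one, T_two_mul_add_one, Finset.image_insert, Finset.image_image]
  congr 1

lemma twoPows_inter_card (a c : ℕ) :
    (twoPows a ∩ twoPows c).card = (T a ∩ T c).card := by
  unfold twoPows
  rw [← Finset.image_inter _ _ (Nat.pow_right_injective le_rfl),
    Finset.card_image_of_injective _ (Nat.pow_right_injective le_rfl)]
  rfl

theorem stmt_4 (b : ℕ) :
    (Odd b → 1 < b → ((twoPows b ∩ twoPows (b - 3)).card : ℤ) = (sigma2 b : ℤ) - 2) ∧
      (Even b → 2 < b → ((twoPows b ∩ twoPows (b - 3)).card : ℤ) = (sigma2 b : ℤ) - 1) := by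
  constructor
  · intro hodd hb
    rw [Nat.odd_iff] at hodd
    set m := b / 4 with hm
    have hmod : b % 4 = 1 ∨ b % 4 = 3 := by omega
    have hdm : b = 4 * m + b % 4 := by omega
    rcases hmod with h1 | h3
    · -- b = 4m+1, m ≥ 1, b - 3 = 4(m-1)+2
      have hm1 : 1 ≤ m := by omega
      have hb3 : 4 * m + 1 - 3 = 4 * (m - 1) + 2 := by omega
      have hbe : b = 4 * m + 1 := by omega
      rw [hbe, hb3, twoPows_inter_card, T_four_mul_add_one, T_four_mul_add_two,
        Finset.insert_inter_of_notMem (by simp),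
        Finset.inter_insert_of_notMem (by simp),
        ← Finset.image_inter _ _ (add_left_injective 2),
        Finset.card_image_of_injective _ (add_left_injective 2)]
      have hkey := key m (by omega)
      have hs : sigma2 (4 * m + 1) = 1 + sigma2 m := by
        have : 4 * m + 1 = 2 * (2 * m) + 1 := by ring
        rw [this, sigma2_two_mul_add_one, sigma2_two_mul m (by omega)]
      rw [hs]
      push_cast
      omega
    · -- b = 4m+3, b - 3 = 4m
      have hbe : b = 4 * m + 3 := by omega
      have hb3 : 4 * m + 3 - 3 = 4 * m := by omega
      rw [hbe, hb3, twoPows_inter_card, T_four_mul_add_three, T_four_mul,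
        Finset.inter_comm,
        Finset.inter_insert_of_notMem (by simp),
        Finset.inter_insert_of_notMem (by simp),
        Finset.inter_self,
        Finset.card_image_of_injective _ (add_left_injective 2), T_card]
      have hs : sigma2 (4 * m + 3) = 2 + sigma2 m := by
        have : 4 * m + 3 = 2 * (2 * m + 1) + 1 := by ring
        rw [this, sigma2_two_mul_add_one, sigma2_two_mul_add_one]
        omega
      rw [hs]
      push_cast
      omega
  · intro heven hb
    rw [Nat.even_iff] at heven
    set m := b / 4 with hm
    have hmod : b % 4 = 0 ∨ b % 4 = 2 := by omega
    rcases hmod with h0 | h2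
    · -- b = 4m, m ≥ 1, b - 3 = 4(m-1)+1
      have hm1 : 1 ≤ m := by omega
      have hbe : b = 4 * m := by omega
      have hb3 : 4 * m - 3 = 4 * (m - 1) + 1 := by omega
      rw [hbe, hb3, twoPows_inter_card, T_four_mul, T_four_mul_add_one,
        Finset.inter_insert_of_notMem (by simp),
        ← Finset.image_inter _ _ (add_left_injective 2),
        Finset.card_image_of_injective _ (add_left_injective 2)]
      have hkey := key m (by omega)
      have hs : sigma2 (4 * m) = sigma2 m := by
        have : 4 * m = 2 * (2 * m) := by ring
        rw [this, sigma2_two_mul _ (by omega), sigma2_two_mul m (by omega)]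
      rw [hs]
      push_cast
      omega
    · -- b = 4m+2, m ≥ 1, b - 3 = 4(m-1)+3
      have hm1 : 1 ≤ m := by omega
      have hbe : b = 4 * m + 2 := by omega
      have hb3 : 4 * m + 2 - 3 = 4 * (m - 1) + 3 := by omega
      rw [hbe, hb3, twoPows_inter_card, T_four_mul_add_two, T_four_mul_add_three,
        Finset.inter_comm,
        Finset.insert_inter_of_notMem (by simp),
        Finset.insert_inter_of_mem (Finset.mem_insert_self 1 _),
        Finset.inter_insert_of_notMem (by simp),
        ← Finset.image_inter _ _ (add_left_injective 2),
        Finset.card_insert_of_notMem (by simp),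
        Finset.card_image_of_injective _ (add_left_injective 2),
        Finset.inter_comm]
      have hkey := key m (by omega)
      have hs : sigma2 (4 * m + 2) = 1 + sigma2 m := by
        have : 4 * m + 2 = 2 * (2 * m + 1) := by ring
        rw [this, sigma2_two_mul _ (by omega), sigma2_two_mul_add_one]
      rw [hs]
      push_cast
      omega
end

section
/- Let h, c be natural numbers with c ≥ 1. Then ν(S(c·2^h + 2^h, 2^h)) = 0, i.e., S((c+1)·2^h, 2^h) is odd. -/
lemma stirling2_eq_zero_of_lt : ∀ {n k : ℕ}, n < k → stirling2 n k = 0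
  | 0, _ + 1, _ => rfl
  | n + 1, k + 1, h => by
    have h1 : n < k + 1 := by omega
    have h2 : n < k := by omega
    simp [stirling2, stirling2_eq_zero_of_lt h1, stirling2_eq_zero_of_lt h2]

lemma stirling2_self (n : ℕ) : stirling2 n n = 1 := by
  induction n with
  | zero => rfl
  | succ n ih =>
    simp [stirling2, stirling2_eq_zero_of_lt (Nat.lt_succ_self n), ih]

lemma stirling2_zero_of_pos {n : ℕ} (hn : 0 < n) : stirling2 n 0 = 0 := by
  cases n with
  | zero => omega
  | succ n => rfl

/-- Parity of Stirling numbers of the second kind. -/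
lemma stirling2_mod_two : ∀ n k : ℕ, 1 ≤ k → k ≤ n →
    stirling2 n k % 2 = (n - k / 2 - 1).choose ((k + 1) / 2 - 1) % 2 := by
  intro n
  induction n with
  | zero => intro k h1 h2; omega
  | succ n ih =>
    intro k hk hkn
    rcases eq_or_lt_of_le hkn with rfl | hlt
    · rw [stirling2_self]
      have : n + 1 - (n + 1) / 2 - 1 = (n + 1 + 1) / 2 - 1 := by omega
      rw [this, Nat.choose_self]
    · have hkn' : k ≤ n := by omega
      obtain ⟨j, rfl⟩ : ∃ j, k = j + 1 := ⟨k - 1, by omega⟩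
      show ((j + 1) * stirling2 n (j + 1) + stirling2 n j) % 2 = _
      rcases Nat.even_or_odd (j + 1) with he | ho
      · -- k = j+1 even, j odd, j = 2a+1
        obtain ⟨a, ha⟩ : ∃ a, j = 2 * a + 1 := by
          rcases he with ⟨b, hb⟩; exact ⟨b - 1, by omega⟩
        obtain ⟨b, hb⟩ := he
        have h2 : (j + 1) * stirling2 n (j + 1) % 2 = 0 := by
          have : 2 ∣ (j + 1) * stirling2 n (j + 1) := ⟨b * stirling2 n (j + 1), by rw [hb]; ring⟩
          omega
        rw [Nat.add_mod, h2, zero_add, Nat.mod_mod_of_dvd _ (dvd_refl 2),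
          ih j (by omega) (by omega)]
        congr 2 <;> omega
      · -- k = j+1 odd, j even
        have hmod : ((j + 1) * stirling2 n (j + 1) + stirling2 n j) % 2 =
            (stirling2 n (j + 1) + stirling2 n j) % 2 := by
          rcases ho with ⟨b, hb⟩
          have hexp : (j + 1) * stirling2 n (j + 1) =
              2 * (b * stirling2 n (j + 1)) + stirling2 n (j + 1) := by rw [hb]; ring
          omega
        rw [hmod]
        rcases Nat.eq_zero_or_pos j with rfl | hj
        · -- k = 1
          rw [stirling2_zero_of_pos (by omega), Nat.add_zero,
            ih 1 le_rfl (by omega)]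
          simp
        · -- j = 2a+2, k = 2a+3
          obtain ⟨a, ha⟩ : ∃ a, j = 2 * a + 2 := by
            rcases ho with ⟨b, hb⟩; exact ⟨b - 1, by omega⟩
          subst ha
          have e1 := ih (2 * a + 3) (by omega) hkn'
          have e2 := ih (2 * a + 2) (by omega) (by omega)
          have c1 : n - (2 * a + 3) / 2 - 1 = n - a - 2 := by omega
          have c2 : (2 * a + 3 + 1) / 2 - 1 = a + 1 := by omega
          have c3 : n - (2 * a + 2) / 2 - 1 = n - a - 2 := by omega
          have c4 : (2 * a + 2 + 1) / 2 - 1 = a := by omega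
          rw [c1, c2] at e1
          rw [c3, c4] at e2
          have t1 : n + 1 - (2 * a + 2 + 1) / 2 - 1 = (n - a - 2) + 1 := by omega
          have t2 : (2 * a + 2 + 1 + 1) / 2 - 1 = a + 1 := by omega
          rw [t1, t2, Nat.choose_succ_succ]
          show (stirling2 n (2 * a + 3) + stirling2 n (2 * a + 2)) % 2 =
            ((n - a - 2).choose a + (n - a - 2).choose (a + 1)) % 2
          omega

/-- `C(a * 2^t + r, r)` is odd when `r < 2^t`. -/
lemma choose_odd : ∀ t a r : ℕ, r < 2 ^ t → (a * 2 ^ t + r).choose r % 2 = 1 := by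
  intro t
  induction t with
  | zero =>
    intro a r hr
    interval_cases r
    simp
  | succ t ih =>
    intro a r hr
    have key := @Choose.choose_modEq_choose_mod_mul_choose_div_nat
      (a * 2 ^ (t + 1) + r) r 2 ⟨Nat.prime_two⟩
    have e : a * 2 ^ (t + 1) = 2 * (a * 2 ^ t) := by ring
    have h1 : (a * 2 ^ (t + 1) + r) % 2 = r % 2 := by omega
    have h2 : (a * 2 ^ (t + 1) + r) / 2 = a * 2 ^ t + r / 2 := by omega
    have h3 : r / 2 < 2 ^ t := by
      have : 2 ^ (t + 1) = 2 * 2 ^ t := by ring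
      omega
    rw [h1, h2, Nat.choose_self] at key
    have := ih a (r / 2) h3
    unfold Nat.ModEq at key
    omega

theorem stmt_15 (h c : ℕ) (hc : 1 ≤ c) :
    padicValNat 2 (stirling2 (c * 2 ^ h + 2 ^ h) (2 ^ h)) = 0 := by
  have hpos : 1 ≤ 2 ^ h := Nat.one_le_two_pow
  have hle : 2 ^ h ≤ c * 2 ^ h + 2 ^ h := by nlinarith
  have key := stirling2_mod_two (c * 2 ^ h + 2 ^ h) (2 ^ h) hpos hle
  have hodd : stirling2 (c * 2 ^ h + 2 ^ h) (2 ^ h) % 2 = 1 := by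
    rw [key]
    cases h with
    | zero => simp
    | succ t =>
      have e2 : (2:ℕ) ^ (t + 1) = 2 * 2 ^ t := by ring
      have hpt : 1 ≤ 2 ^ t := Nat.one_le_two_pow
      have harg : c * 2 ^ (t + 1) + 2 ^ (t + 1) - 2 ^ (t + 1) / 2 - 1 =
          (2 * c) * 2 ^ t + (2 ^ t - 1) := by
        have k1 : c * 2 ^ (t + 1) = 2 * (c * 2 ^ t) := by ring
        have k2 : (2 * c) * 2 ^ t = 2 * (c * 2 ^ t) := by ring
        omega
      have harg2 : (2 ^ (t + 1) + 1) / 2 - 1 = 2 ^ t - 1 := by omega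
      rw [harg, harg2]
      exact choose_odd t (2 * c) (2 ^ t - 1) (by omega)
  apply padicValNat.eq_zero_of_not_dvd
  omega
end
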